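/- arXiv:1001.2363 — 2 statements merged into one kernel-verified Lean document; each statement's English description precedes it below -/
import Mathlib

section
/- Suppose ‖P_T P_Ω‖ ≤ 1/2. Then for any pair X = (L, S) of real n×n matrices, ‖P_Γ((P_T × P_Ω)(X))‖_F² ≥ (1/4)·‖(P_T × P_Ω)(X)‖_F². -/
open Matrix BigOperators

noncomputable def frobNorm {m k : ℕ} (A : Matrix (Fin m) (Fin k) ℝ) : ℝ :=
  Real.sqrt (∑ i, ∑ j, (A i j) ^ 2)

noncomputable def nuclearNorm {m k : ℕ} (A : Matrix (Fin m) (Fin k) ℝ) : ℝ :=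
  ∑ i, Real.sqrt ((Matrix.isHermitian_conjTranspose_mul_self A).eigenvalues i)

def l1Norm {m k : ℕ} (A : Matrix (Fin m) (Fin k) ℝ) : ℝ :=
  ∑ i, ∑ j, |A i j|

noncomputable def linfNorm {m k : ℕ} (A : Matrix (Fin m) (Fin k) ℝ) : ℝ :=
  ⨆ i, ⨆ j, |A i j|

noncomputable def specNorm {m k : ℕ} (A : Matrix (Fin m) (Fin k) ℝ) : ℝ :=
  ‖LinearMap.toContinuousLinearMap (Matrix.toEuclideanLin A)‖

def finner {m k : ℕ} (A B : Matrix (Fin m) (Fin k) ℝ) : ℝ :=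
  ∑ i, ∑ j, A i j * B i j

noncomputable def projSet {n : ℕ} (Ω : Set (Fin n × Fin n)) (S : Matrix (Fin n) (Fin n) ℝ) :
    Matrix (Fin n) (Fin n) ℝ :=
  fun i j => Ω.indicator (fun p => S p.1 p.2) (i, j)

def suppSet {n : ℕ} (S : Matrix (Fin n) (Fin n) ℝ) : Set (Fin n × Fin n) :=
  {p | S p.1 p.2 ≠ 0}

noncomputable def sgnMat {n : ℕ} (S : Matrix (Fin n) (Fin n) ℝ) : Matrix (Fin n) (Fin n) ℝ :=
  fun i j => Real.sign (S i j)

def Tspace {n r : ℕ} (U V : Matrix (Fin n) (Fin r) ℝ) : Set (Matrix (Fin n) (Fin n) ℝ) :=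
  {X | ∃ Q R : Matrix (Fin n) (Fin r) ℝ, X = U * Qᵀ + R * Vᵀ}

def IsOrthProjOnto {n : ℕ} (P : Matrix (Fin n) (Fin n) ℝ →ₗ[ℝ] Matrix (Fin n) (Fin n) ℝ)
    (T : Set (Matrix (Fin n) (Fin n) ℝ)) : Prop :=
  (∀ X, P X ∈ T) ∧ (∀ X ∈ T, P X = X) ∧ (∀ X Y, Y ∈ T → finner (X - P X) Y = 0)

noncomputable def pairFrob {n : ℕ} (X : Matrix (Fin n) (Fin n) ℝ × Matrix (Fin n) (Fin n) ℝ) : ℝ :=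
  Real.sqrt (frobNorm X.1 ^ 2 + frobNorm X.2 ^ 2)

noncomputable def projGamma {n : ℕ} (X : Matrix (Fin n) (Fin n) ℝ × Matrix (Fin n) (Fin n) ℝ) :
    Matrix (Fin n) (Fin n) ℝ × Matrix (Fin n) (Fin n) ℝ :=
  ((1/2 : ℝ) • (X.1 + X.2), (1/2 : ℝ) • (X.1 + X.2))

open scoped Classical

noncomputable def suppFinset {n : ℕ} (S : Matrix (Fin n) (Fin n) ℝ) : Finset (Fin n × Fin n) :=
  Finset.univ.filter (fun p => S p.1 p.2 ≠ 0)


lemma frobNorm_sq' {m k : ℕ} (A : Matrix (Fin m) (Fin k) ℝ) :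
    frobNorm A ^ 2 = ∑ i, ∑ j, (A i j) ^ 2 := by
  unfold frobNorm
  exact Real.sq_sqrt (Finset.sum_nonneg fun i _ => Finset.sum_nonneg fun j _ => sq_nonneg _)

lemma frobNorm_nonneg' {m k : ℕ} (A : Matrix (Fin m) (Fin k) ℝ) : 0 ≤ frobNorm A :=
  Real.sqrt_nonneg _

lemma finner_cs {m k : ℕ} (A B : Matrix (Fin m) (Fin k) ℝ) :
    finner A B ≤ frobNorm A * frobNorm B := by
  have h := Real.sum_mul_le_sqrt_mul_sqrt (Finset.univ : Finset (Fin m × Fin k))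
    (fun p => A p.1 p.2) (fun p => B p.1 p.2)
  simpa [finner, frobNorm, Fintype.sum_prod_type] using h

lemma finner_ge_neg {m k : ℕ} (A B : Matrix (Fin m) (Fin k) ℝ) :
    -(frobNorm A * frobNorm B) ≤ finner A B := by
  have h := finner_cs (-A) B
  have h1 : finner (-A) B = -finner A B := by
    simp [finner, Finset.sum_neg_distrib]
  have h2 : frobNorm (-A) = frobNorm A := by
    simp [frobNorm]
  rw [h1, h2] at h
  linarith

lemma finner_sub_left' {m k : ℕ} (A B C : Matrix (Fin m) (Fin k) ℝ) :
    finner (A - B) C = finner A C - finner B C := by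
  simp [finner, Matrix.sub_apply, sub_mul, Finset.sum_sub_distrib]

lemma projSet_idem {n : ℕ} (Ω : Set (Fin n × Fin n)) (S : Matrix (Fin n) (Fin n) ℝ) :
    projSet Ω (projSet Ω S) = projSet Ω S := by
  funext i j
  unfold projSet
  by_cases h : (i, j) ∈ Ω <;> simp [Set.indicator_apply, h]

/-- Lemma 2.
If ‖P_T P_Ω‖ ≤ 1/2 then for any pair X = (L, S),
‖P_Γ((P_T × P_Ω)(X))‖_F² ≥ (1/4)‖(P_T × P_Ω)(X)‖_F². -/
theorem stmt5 {n : ℕ} (T : Submodule ℝ (Matrix (Fin n) (Fin n) ℝ))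
    (PT : Matrix (Fin n) (Fin n) ℝ →ₗ[ℝ] Matrix (Fin n) (Fin n) ℝ)
    (hPT : IsOrthProjOnto PT (T : Set (Matrix (Fin n) (Fin n) ℝ)))
    (Ω : Set (Fin n × Fin n))
    -- ‖P_T P_Ω‖ ≤ 1/2
    (hop : ∀ X : Matrix (Fin n) (Fin n) ℝ, frobNorm (PT (projSet Ω X)) ≤ (1 / 2) * frobNorm X)
    (L S : Matrix (Fin n) (Fin n) ℝ) :
    pairFrob (projGamma (PT L, projSet Ω S)) ^ 2 ≥
      (1 / 4) * pairFrob (PT L, projSet Ω S) ^ 2 := by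
  set A := PT L with hA
  set B := projSet Ω S with hB
  have hAT : A ∈ (T : Set (Matrix (Fin n) (Fin n) ℝ)) := hPT.1 L
  -- t = finner B A = finner (PT B) A
  have hsa : finner B A = finner (PT B) A := by
    have := hPT.2.2 B A hAT
    rw [finner_sub_left'] at this
    linarith
  -- bound on frobNorm (PT B)
  have hPTB : frobNorm (PT B) ≤ (1 / 2) * frobNorm B := by
    have := hop B
    rwa [hB, projSet_idem, ← hB] at this
  set a := frobNorm A with ha
  set b := frobNorm B with hb
  have ha0 : 0 ≤ a := frobNorm_nonneg' A
  have hb0 : 0 ≤ b := frobNorm_nonneg' B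
  have hcs : -(frobNorm (PT B) * a) ≤ finner (PT B) A := finner_ge_neg _ _
  have hPTB0 : 0 ≤ frobNorm (PT B) := frobNorm_nonneg' _
  have ht : -(1/2 * b * a) ≤ finner B A := by
    rw [hsa]
    have : -(1/2 * b * a) ≤ -(frobNorm (PT B) * a) := by nlinarith
    linarith
  -- expand both sides
  have hC : frobNorm ((1/2 : ℝ) • (A + B)) ^ 2
      = (1/4) * (a^2) + (1/2) * finner A B + (1/4) * (b^2) := by
    rw [frobNorm_sq', ha, hb, frobNorm_sq', frobNorm_sq']
    simp only [finner]
    have key : ∀ i j : Fin n, ((1/2:ℝ) • (A + B)) i j ^ 2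
        = 1/4 * A i j ^ 2 + 1/2 * (A i j * B i j) + 1/4 * B i j ^ 2 := by
      intro i j
      simp only [Matrix.smul_apply, Matrix.add_apply, smul_eq_mul]
      ring
    simp only [key, Finset.sum_add_distrib, Finset.mul_sum]
  have hcomm : finner A B = finner B A := by
    simp [finner, mul_comm]
  have h1 : pairFrob (projGamma (A, B)) ^ 2 = 2 * frobNorm ((1/2 : ℝ) • (A + B)) ^ 2 := by
    unfold pairFrob projGamma
    rw [Real.sq_sqrt (by positivity)]
    ring
  have h2 : pairFrob (A, B) ^ 2 = a ^ 2 + b ^ 2 := by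
    unfold pairFrob
    rw [Real.sq_sqrt (by positivity)]
  rw [ge_iff_le, h1, h2, hC, hcomm]
  nlinarith [sq_nonneg (a - b)]
end

section
/- Suppose ‖P_Ω P_T‖ ≤ 1/2. Then every real n×n matrix H satisfies ‖P_Ω(H)‖_F ≤ ‖P_{Ω⊥}(H)‖_F + 2·‖P_{T⊥}(H)‖_F. -/
open Matrix BigOperators

open scoped Classical

noncomputable def toE' {n : ℕ} (A : Matrix (Fin n) (Fin n) ℝ) :
    EuclideanSpace ℝ (Fin n × Fin n) := WithLp.toLp 2 (fun p => A p.1 p.2)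

lemma frob_eq_norm' {n : ℕ} (A : Matrix (Fin n) (Fin n) ℝ) : frobNorm A = ‖toE' A‖ := by
  rw [EuclideanSpace.norm_eq, frobNorm]
  congr 1
  rw [Fintype.sum_prod_type]
  simp [toE', Real.norm_eq_abs, sq_abs]

lemma frob_triangle' {n : ℕ} (A B : Matrix (Fin n) (Fin n) ℝ) :
    frobNorm (A + B) ≤ frobNorm A + frobNorm B := by
  have h : toE' (A + B) = toE' A + toE' B := by
    ext p; rfl
  rw [frob_eq_norm', frob_eq_norm', frob_eq_norm', h]
  exact norm_add_le _ _

lemma frob_proj_le' {n : ℕ} (Ω : Set (Fin n × Fin n)) (X : Matrix (Fin n) (Fin n) ℝ) :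
    frobNorm (projSet Ω X) ≤ frobNorm X := by
  unfold frobNorm
  apply Real.sqrt_le_sqrt
  apply Finset.sum_le_sum
  intro i _
  apply Finset.sum_le_sum
  intro j _
  simp only [projSet, Set.indicator]
  split_ifs
  · exact le_rfl
  · simpa using sq_nonneg (X i j)

/-- If ‖P_Ω P_T‖ ≤ 1/2, then every H satisfies ‖P_Ω H‖_F ≤ ‖P_{Ω⊥} H‖_F + 2‖P_{T⊥} H‖_F. -/
theorem stmt6 {n : ℕ} (T : Submodule ℝ (Matrix (Fin n) (Fin n) ℝ))
    (PT : Matrix (Fin n) (Fin n) ℝ →ₗ[ℝ] Matrix (Fin n) (Fin n) ℝ)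
    (hPT : IsOrthProjOnto PT (T : Set (Matrix (Fin n) (Fin n) ℝ)))
    (Ω : Set (Fin n × Fin n))
    -- ‖P_Ω P_T‖ ≤ 1/2
    (hop : ∀ X : Matrix (Fin n) (Fin n) ℝ, frobNorm (projSet Ω (PT X)) ≤ (1 / 2) * frobNorm X)
    (H : Matrix (Fin n) (Fin n) ℝ) :
    frobNorm (projSet Ω H) ≤ frobNorm (H - projSet Ω H) + 2 * frobNorm (H - PT H) := by
  set a := frobNorm (projSet Ω H) with ha
  set b := frobNorm (H - projSet Ω H) with hb
  set c := frobNorm (H - PT H) with hc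
  have hsplit : projSet Ω H = projSet Ω (PT H) + projSet Ω (H - PT H) := by
    funext i j
    simp only [projSet, Set.indicator, Matrix.add_apply, Matrix.sub_apply]
    split_ifs <;> simp
  have h1 : a ≤ frobNorm (projSet Ω (PT H)) + frobNorm (projSet Ω (H - PT H)) := by
    rw [ha, hsplit]; exact frob_triangle' _ _
  have h2 : frobNorm (projSet Ω (PT H)) ≤ (1/2) * frobNorm H := hop H
  have h3 : frobNorm (projSet Ω (H - PT H)) ≤ c := frob_proj_le' _ _
  have h4 : frobNorm H ≤ a + b := by
    have : H = projSet Ω H + (H - projSet Ω H) := by abel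
    calc frobNorm H = frobNorm (projSet Ω H + (H - projSet Ω H)) := by rw [← this]
      _ ≤ a + b := frob_triangle' _ _
  linarith
end
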